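/- For the transport equation u_t = -a u_x (a ∈ ℝ, a ≠ 0) on the circle with initial data u₀ whose Fourier coefficients satisfy |û₀(k)| ≥ c|k|^{-s} for |k| ≤ K, any linear subspace V ⊂ L² approximating all snapshots {u(·,t) : 0 ≤ t ≤ T} with T ≥ 2π/(a) to within ε in L² must have dimension at least the number of k with c|k|^{-s} > ε; i.e., dim V ≥ (c/ε)^{1/s} − 1. -/

import Mathlib

open Complex Finset

lemma geom_zero_aux (N : ℕ) (hN : 0 < N) (d : ℤ) (hd : d ≠ 0) (hdlt : |d| < (N : ℤ)) :
    ∑ j ∈ Finset.range N, Complex.exp (2 * (Real.pi : ℂ) * Complex.I * d / N) ^ j = 0 := by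
  have hNC : (N : ℂ) ≠ 0 := Nat.cast_ne_zero.mpr hN.ne'
  have hz : Complex.exp (2 * (Real.pi : ℂ) * Complex.I * d / N) ≠ 1 := by
    intro h1
    rw [Complex.exp_eq_one_iff] at h1
    obtain ⟨q, hq⟩ := h1
    have h2 : (2 * (Real.pi : ℂ) * Complex.I) ≠ 0 := by
      simp [Real.pi_ne_zero, Complex.I_ne_zero]
    have hdq : (d : ℂ) = q * N := by
      field_simp at hq
      linear_combination hq
    have hdq' : d = q * N := by exact_mod_cast hdq
    rcases eq_or_ne q 0 with h0 | h0
    · exact hd (by simp [hdq', h0])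
    · have : (N : ℤ) ≤ |d| := by
        have hNa : |(N : ℤ)| = N := abs_of_nonneg (by positivity)
        rw [hdq', abs_mul, hNa]
        nlinarith [Int.one_le_abs h0]
      omega
  rw [geom_sum_eq hz]
  have hNpow : Complex.exp (2 * (Real.pi : ℂ) * Complex.I * d / N) ^ N = 1 := by
    rw [← Complex.exp_nat_mul]
    have : (N : ℂ) * (2 * (Real.pi : ℂ) * Complex.I * d / N) = d * (2 * Real.pi * Complex.I) := by
      field_simp
    rw [this, Complex.exp_int_mul_two_pi_mul_I]
  simp [hNpow]

lemma dft_sum (N : ℕ) (hN : 0 < N) (c : Fin N → ℂ) :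
    ∑ j : Fin N,
      (∑ m : Fin N, c m * Complex.exp (-(2 * (Real.pi : ℂ) * Complex.I) / N)
          ^ (((m : ℕ) + 1) * (j : ℕ))) *
      (starRingEnd ℂ) (∑ m : Fin N, c m * Complex.exp (-(2 * (Real.pi : ℂ) * Complex.I) / N)
          ^ (((m : ℕ) + 1) * (j : ℕ)))
      = N * ∑ m : Fin N, c m * (starRingEnd ℂ) (c m) := by
  have hNC : (N : ℂ) ≠ 0 := Nat.cast_ne_zero.mpr hN.ne'
  set ω : ℂ := Complex.exp (-(2 * (Real.pi : ℂ) * Complex.I) / N) with hω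
  have hconj : (starRingEnd ℂ) ω = Complex.exp ((2 * (Real.pi : ℂ) * Complex.I) / N) := by
    rw [hω, ← Complex.exp_conj]
    congr 1
    simp [map_div₀, Complex.conj_I, map_ofNat]
  have key : ∀ m m' : Fin N,
      ∑ j ∈ Finset.range N, (ω ^ ((m : ℕ) + 1) * ((starRingEnd ℂ) ω) ^ ((m' : ℕ) + 1)) ^ j
        = if m' = m then (N : ℂ) else 0 := by
    intro m m'
    have hz : ω ^ ((m : ℕ) + 1) * ((starRingEnd ℂ) ω) ^ ((m' : ℕ) + 1)
        = Complex.exp (2 * (Real.pi : ℂ) * Complex.I * (((m' : ℤ) - (m : ℤ) : ℤ) : ℂ) / N) := by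
      rw [hconj, hω, ← Complex.exp_nat_mul, ← Complex.exp_nat_mul, ← Complex.exp_add]
      congr 1
      push_cast
      field_simp
      ring
    rw [hz]
    by_cases hmm : m' = m
    · subst hmm
      simp
    · have hd : ((m' : ℤ) - (m : ℤ)) ≠ 0 := by
        simp only [sub_ne_zero]
        exact_mod_cast fun h => hmm (Fin.ext (by exact_mod_cast h))
      have hdlt : |((m' : ℤ) - (m : ℤ))| < (N : ℤ) := by
        have h1 : (m : ℤ) < N := by exact_mod_cast m.isLt
        have h2 : (m' : ℤ) < N := by exact_mod_cast m'.isLt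
        have h3 : (0 : ℤ) ≤ (m : ℤ) := by positivity
        have h4 : (0 : ℤ) ≤ (m' : ℤ) := by positivity
        rw [abs_lt]; omega
      rw [geom_zero_aux N hN _ hd hdlt]
      simp [hmm]
  calc ∑ j : Fin N,
      (∑ m : Fin N, c m * ω ^ (((m : ℕ) + 1) * (j : ℕ))) *
      (starRingEnd ℂ) (∑ m : Fin N, c m * ω ^ (((m : ℕ) + 1) * (j : ℕ)))
      = ∑ j : Fin N, ∑ m : Fin N, ∑ m' : Fin N, (c m * (starRingEnd ℂ) (c m')) *
          (ω ^ ((m : ℕ) + 1) * ((starRingEnd ℂ) ω) ^ ((m' : ℕ) + 1)) ^ (j : ℕ) := by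
        refine Finset.sum_congr rfl fun j _ => ?_
        rw [map_sum, Finset.sum_mul_sum]
        refine Finset.sum_congr rfl fun m _ => Finset.sum_congr rfl fun m' _ => ?_
        rw [map_mul, map_pow, mul_pow, ← pow_mul, ← pow_mul]
        ring
    _ = ∑ m : Fin N, ∑ m' : Fin N, (c m * (starRingEnd ℂ) (c m')) *
          ∑ j ∈ Finset.range N, (ω ^ ((m : ℕ) + 1) * ((starRingEnd ℂ) ω) ^ ((m' : ℕ) + 1)) ^ j := by
        rw [Finset.sum_comm]
        refine Finset.sum_congr rfl fun m _ => ?_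
        rw [Finset.sum_comm]
        refine Finset.sum_congr rfl fun m' _ => ?_
        rw [← Finset.mul_sum, ← Fin.sum_univ_eq_sum_range]
    _ = N * ∑ m : Fin N, c m * (starRingEnd ℂ) (c m) := by
        simp only [key, mul_ite, mul_zero, Finset.sum_ite_eq', Finset.mem_univ, if_true,
          Finset.mul_sum]
        exact Finset.sum_congr rfl fun m _ => by ring

/-- Kolmogorov-width lower bound for transport: the snapshots of
`u(x,t) = ∑_k û₀(k) e^{ik(x-at)}` over a full period `T ≥ 2π/a` cannot all be approximated
within `ε` in `L²` (identified with `ℓ²` of Fourier coefficients) by an `n`-dimensional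
linear subspace unless `n` is at least the number of modes with `c|k|^{-s} > ε`, i.e.
`n ≥ (c/ε)^{1/s} - 1`. Here `|û₀(k)| ≥ c|k|^{-s}` for `0 < |k| ≤ K` and all such relevant
modes satisfy `|k| ≤ K`. -/
theorem stmt13 (a c s ε T : ℝ) (K : ℕ)
    (ha : 0 < a) (hc : 0 < c) (hs : 0 < s) (hε : 0 < ε)
    (hT : 2 * Real.pi / a ≤ T)
    (b : ℤ → ℂ)
    (hb : ∀ k : ℤ, k ≠ 0 → |k| ≤ (K : ℤ) →
      c * |((k : ℤ) : ℝ)| ^ (-s) ≤ ‖b k‖)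
    (hK : (c / ε) ^ (1 / s) ≤ (K : ℝ))
    (n : ℕ) (W : Fin n → ℤ → ℂ)
    (happrox : ∀ t ∈ Set.Icc (0 : ℝ) T, ∃ γ : Fin n → ℂ,
      ∀ J : Finset ℤ, ∑ k ∈ J,
        ‖b k * Complex.exp (-Complex.I * (k : ℂ) * (a : ℂ) * (t : ℂ))
          - ∑ i, γ i * W i k‖ ^ 2 ≤ ε ^ 2) :
    (c / ε) ^ (1 / s) - 1 ≤ (n : ℝ) := by
  classical
  by_contra hcon
  push_neg at hcon
  set N : ℕ := n + 1 with hNdef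
  have hNpos : 0 < N := Nat.succ_pos n
  have hX : ((N : ℕ) : ℝ) < (c / ε) ^ (1 / s) := by rw [hNdef]; push_cast; linarith
  have hcε : (0 : ℝ) < c / ε := div_pos hc hε
  -- each relevant mode has |b k| > ε
  have hNK : (N : ℤ) ≤ (K : ℤ) := by
    have : ((N : ℕ) : ℝ) < (K : ℝ) := lt_of_lt_of_le hX hK
    exact_mod_cast this.le
  have hmode : ∀ m : Fin N, ε < ‖b ((m : ℤ) + 1)‖ := by
    intro m
    have hkN : ((m : ℕ) : ℝ) + 1 ≤ (N : ℝ) := by exact_mod_cast Nat.succ_le_of_lt m.isLt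
    have hkpos : (0 : ℝ) < ((m : ℕ) : ℝ) + 1 := by positivity
    have hpow : (((m : ℕ) : ℝ) + 1) ^ s < c / ε := by
      calc (((m : ℕ) : ℝ) + 1) ^ s < ((c / ε) ^ (1 / s)) ^ s :=
            Real.rpow_lt_rpow hkpos.le (lt_of_le_of_lt hkN hX) hs
        _ = c / ε := by
            rw [← Real.rpow_mul hcε.le, one_div_mul_cancel hs.ne', Real.rpow_one]
    have hks : (0 : ℝ) < (((m : ℕ) : ℝ) + 1) ^ s := Real.rpow_pos_of_pos hkpos s
    have hlt : ε < c * (((m : ℕ) : ℝ) + 1) ^ (-s) := by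
      rw [Real.rpow_neg hkpos.le, ← div_eq_mul_inv, lt_div_iff₀ hks]
      rw [lt_div_iff₀ hε] at hpow
      linarith
    have hbk := hb ((m : ℤ) + 1) (by omega) (by
      have : ((m : ℤ) + 1) ≤ (N : ℤ) := by
        have := m.isLt; omega
      rw [abs_of_pos (by omega : (0:ℤ) < (m : ℤ) + 1)]
      omega)
    have habs : |(((m : ℤ) + 1 : ℤ) : ℝ)| = ((m : ℕ) : ℝ) + 1 := by
      push_cast
      rw [abs_of_pos hkpos]
    rw [habs] at hbk
    exact lt_of_lt_of_le hlt hbk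
  -- linear algebra: a unit vector orthogonal to the span of the W columns
  let E := EuclideanSpace ℂ (Fin N)
  let w : Fin n → E := fun i => WithLp.toLp 2 (fun m => W i ((m : ℤ) + 1) : Fin N → ℂ)
  let Ksub : Submodule ℂ E := Submodule.span ℂ (Set.range w)
  have hKtop : Ksub ≠ ⊤ := by
    intro htop
    have h1 : Module.finrank ℂ E ≤ Fintype.card (Fin n) := finrank_le_of_span_eq_top htop
    rw [Fintype.card_fin] at h1
    have h2 : Module.finrank ℂ E = N := by
      show Module.finrank ℂ (EuclideanSpace ℂ (Fin N)) = N
      rw [finrank_euclideanSpace, Fintype.card_fin]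
    omega
  have hbot : Ksubᗮ ≠ ⊥ := fun h => hKtop (Submodule.orthogonal_eq_bot_iff.mp h)
  obtain ⟨v, hv_mem, hv_ne⟩ := (Submodule.ne_bot_iff Ksubᗮ).mp hbot
  set u : E := ‖v‖⁻¹ • v with hu_def
  have hu_mem : u ∈ Ksubᗮ := Submodule.smul_of_tower_mem _ _ hv_mem
  have hu_norm : ‖u‖ = 1 := norm_smul_inv_norm hv_ne
  have hu_sum : ∑ m : Fin N, ‖u m‖ ^ 2 = 1 := by
    have h1 := EuclideanSpace.norm_eq u
    rw [hu_norm] at h1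
    have h2 : ∑ m : Fin N, ‖u m‖ ^ 2 = 1 := by
      have hnn : 0 ≤ ∑ m : Fin N, ‖u m‖ ^ 2 := Finset.sum_nonneg fun m _ => sq_nonneg _
      calc ∑ m : Fin N, ‖u m‖ ^ 2 = Real.sqrt (∑ m : Fin N, ‖u m‖ ^ 2) ^ 2 :=
            (Real.sq_sqrt hnn).symm
        _ = 1 ^ 2 := by rw [← h1]
        _ = 1 := one_pow 2
    simpa using h2
  have hinner : ∀ t ∈ Set.Icc (0 : ℝ) T,
      ‖∑ m : Fin N, (starRingEnd ℂ) (u m) *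
        (b ((m : ℤ) + 1) *
          Complex.exp (-Complex.I * (((m : ℤ) + 1 : ℤ) : ℂ) * (a : ℂ) * (t : ℂ)))‖ ≤ ε := by
    intro t ht
    obtain ⟨γ, hγ⟩ := happrox t ht
    set z : E := WithLp.toLp 2 (fun m => b ((m : ℤ) + 1) *
      Complex.exp (-Complex.I * (((m : ℤ) + 1 : ℤ) : ℂ) * (a : ℂ) * (t : ℂ)) : Fin N → ℂ)
      with hz_def
    set A : E := WithLp.toLp 2 (fun m => ∑ i, γ i * W i ((m : ℤ) + 1) : Fin N → ℂ) with hA_def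
    have hA_mem : A ∈ Ksub := by
      have hA_eq : A = ∑ i, γ i • w i := by
        ext m
        show ∑ i, γ i * W i ((m : ℤ) + 1) = (∑ x : Fin n, γ x • w x) m
        rw [WithLp.ofLp_sum, Finset.sum_apply]
        rfl
      rw [hA_eq]
      exact Submodule.sum_mem _ fun i _ => Submodule.smul_mem _ _ (Submodule.subset_span ⟨i, rfl⟩)
    have hiA : (inner ℂ u A : ℂ) = 0 := Submodule.inner_left_of_mem_orthogonal hA_mem hu_mem
    have hnormzA : ‖z - A‖ ≤ ε := by
      rw [EuclideanSpace.norm_eq]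
      have hinj : ∀ x ∈ (Finset.univ : Finset (Fin N)), ∀ y ∈ Finset.univ,
          (fun m : Fin N => (m : ℤ) + 1) x = (fun m : Fin N => (m : ℤ) + 1) y → x = y := by
        intro x _ y _ hxy
        simp only [add_left_inj] at hxy
        exact Fin.ext (by exact_mod_cast hxy)
      have hJ := hγ (Finset.image (fun m : Fin N => (m : ℤ) + 1) Finset.univ)
      rw [Finset.sum_image hinj] at hJ
      have hsum : ∑ m : Fin N, ‖(z - A) m‖ ^ 2 ≤ ε ^ 2 := by
        refine le_trans (le_of_eq ?_) hJ
        refine Finset.sum_congr rfl fun m _ => ?_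
        rfl
      calc Real.sqrt (∑ m : Fin N, ‖(z - A) m‖ ^ 2) ≤ Real.sqrt (ε ^ 2) :=
            Real.sqrt_le_sqrt hsum
        _ = ε := Real.sqrt_sq hε.le
    have hiz : (inner ℂ u z : ℂ) = inner ℂ u (z - A) := by rw [inner_sub_right, hiA, sub_zero]
    have habs_eq : ‖∑ m : Fin N, (starRingEnd ℂ) (u m) *
        (b ((m : ℤ) + 1) *
          Complex.exp (-Complex.I * (((m : ℤ) + 1 : ℤ) : ℂ) * (a : ℂ) * (t : ℂ)))‖
        = ‖(inner ℂ u z : ℂ)‖ := by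
      rw [PiLp.inner_apply]
      simp only [RCLike.inner_apply, hz_def]
      exact congrArg (‖·‖) (Finset.sum_congr rfl fun m _ => mul_comm _ _)
    rw [habs_eq, hiz]
    calc ‖(inner ℂ u (z - A) : ℂ)‖ ≤ ‖u‖ * ‖z - A‖ := norm_inner_le_norm u (z - A)
      _ = ‖z - A‖ := by rw [hu_norm, one_mul]
      _ ≤ ε := hnormzA
  -- sample times over one period
  have hNC : ((N : ℕ) : ℂ) ≠ 0 := Nat.cast_ne_zero.mpr hNpos.ne'
  have haC : ((a : ℝ) : ℂ) ≠ 0 := Complex.ofReal_ne_zero.mpr ha.ne'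
  set τ : Fin N → ℝ := fun j => 2 * Real.pi * j / (a * N) with hτ_def
  have hτ_mem : ∀ j : Fin N, τ j ∈ Set.Icc (0 : ℝ) T := by
    intro j
    have hπ := Real.pi_pos
    constructor
    · rw [hτ_def]
      positivity
    · have hjN : ((j : ℕ) : ℝ) ≤ N := by exact_mod_cast (Nat.le_of_lt j.isLt)
      have h1 : τ j ≤ 2 * Real.pi / a := by
        rw [hτ_def, div_le_div_iff₀ (by positivity) ha]
        have h2 := mul_le_mul_of_nonneg_left hjN (by positivity : (0:ℝ) ≤ 2 * Real.pi * a)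
        nlinarith [h2]
      linarith
  set ω : ℂ := Complex.exp (-(2 * (Real.pi : ℂ) * Complex.I) / N) with hω_def
  have hexp : ∀ (m j : Fin N),
      Complex.exp (-Complex.I * (((m : ℤ) + 1 : ℤ) : ℂ) * (a : ℂ) * ((τ j : ℝ) : ℂ))
        = ω ^ (((m : ℕ) + 1) * (j : ℕ)) := by
    intro m j
    rw [hω_def, ← Complex.exp_nat_mul]
    congr 1
    rw [hτ_def]
    have hn1 : ((n : ℂ) + 1) ≠ 0 := Nat.cast_add_one_ne_zero n
    push_cast
    field_simp
  have hdft := dft_sum N hNpos (fun m => (starRingEnd ℂ) (u m) * b ((m : ℤ) + 1))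
  rw [← hω_def] at hdft
  set F : Fin N → ℂ := fun j => ∑ m : Fin N,
    ((starRingEnd ℂ) (u m) * b ((m : ℤ) + 1)) * ω ^ (((m : ℕ) + 1) * (j : ℕ)) with hF_def
  have hF_bound : ∀ j : Fin N, ‖F j‖ ≤ ε := by
    intro j
    have hin := hinner (τ j) (hτ_mem j)
    refine le_trans (le_of_eq ?_) hin
    rw [hF_def]
    refine congrArg (‖·‖) (Finset.sum_congr rfl fun m _ => ?_)
    rw [hexp m j]
    ring
  have hdft' : ∑ j : Fin N, Complex.normSq (F j)
      = N * ∑ m : Fin N, Complex.normSq ((starRingEnd ℂ) (u m) * b ((m : ℤ) + 1)) := by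
    have hcast : ((∑ j : Fin N, Complex.normSq (F j) : ℝ) : ℂ)
        = (((N : ℝ) * ∑ m : Fin N, Complex.normSq ((starRingEnd ℂ) (u m) * b ((m : ℤ) + 1)) : ℝ) : ℂ) := by
      push_cast
      simp only [← Complex.mul_conj]
      exact_mod_cast hdft
    exact_mod_cast hcast
  have hle : ∑ j : Fin N, Complex.normSq (F j) ≤ N * ε ^ 2 := by
    calc ∑ j : Fin N, Complex.normSq (F j) ≤ ∑ _j : Fin N, ε ^ 2 := by
          refine Finset.sum_le_sum fun j _ => ?_
          rw [← Complex.sq_norm]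
          exact pow_le_pow_left₀ (norm_nonneg _) (hF_bound j) 2
      _ = N * ε ^ 2 := by
          rw [Finset.sum_const, Finset.card_univ, Fintype.card_fin, nsmul_eq_mul]
  have hgt : ε ^ 2 < ∑ m : Fin N, Complex.normSq ((starRingEnd ℂ) (u m) * b ((m : ℤ) + 1)) := by
    have hterm : ∀ m : Fin N, ε ^ 2 * ‖u m‖ ^ 2
        ≤ Complex.normSq ((starRingEnd ℂ) (u m) * b ((m : ℤ) + 1)) := by
      intro m
      rw [Complex.normSq_mul, Complex.normSq_conj, ← Complex.sq_norm, ← Complex.sq_norm]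
      have h1 := (hmode m).le
      have hb2 : ε ^ 2 ≤ ‖b ((m : ℤ) + 1)‖ ^ 2 :=
        pow_le_pow_left₀ hε.le h1 2
      calc ε ^ 2 * ‖u m‖ ^ 2
          ≤ ‖b ((m : ℤ) + 1)‖ ^ 2 * ‖u m‖ ^ 2 :=
            mul_le_mul_of_nonneg_right hb2 (sq_nonneg _)
        _ = ‖u m‖ ^ 2 * ‖b ((m : ℤ) + 1)‖ ^ 2 := mul_comm _ _
    obtain ⟨m0, hm0⟩ : ∃ m : Fin N, ‖u m‖ ^ 2 ≠ 0 := by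
      by_contra hall
      push_neg at hall
      rw [Finset.sum_eq_zero (fun m _ => hall m)] at hu_sum
      norm_num at hu_sum
    have hstrict : ε ^ 2 * ‖u m0‖ ^ 2
        < Complex.normSq ((starRingEnd ℂ) (u m0) * b ((m0 : ℤ) + 1)) := by
      rw [Complex.normSq_mul, Complex.normSq_conj, ← Complex.sq_norm, ← Complex.sq_norm]
      have h1 := hmode m0
      have h2 : 0 < ‖u m0‖ ^ 2 := lt_of_le_of_ne (sq_nonneg _) (Ne.symm hm0)
      have hb2 : ε ^ 2 < ‖b ((m0 : ℤ) + 1)‖ ^ 2 :=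
        pow_lt_pow_left₀ h1 hε.le (by norm_num)
      calc ε ^ 2 * ‖u m0‖ ^ 2
          < ‖b ((m0 : ℤ) + 1)‖ ^ 2 * ‖u m0‖ ^ 2 :=
            mul_lt_mul_of_pos_right hb2 h2
        _ = ‖u m0‖ ^ 2 * ‖b ((m0 : ℤ) + 1)‖ ^ 2 := mul_comm _ _
    calc ε ^ 2 = ε ^ 2 * ∑ m : Fin N, ‖u m‖ ^ 2 := by rw [hu_sum, mul_one]
      _ = ∑ m : Fin N, ε ^ 2 * ‖u m‖ ^ 2 := Finset.mul_sum _ _ _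
      _ < ∑ m : Fin N, Complex.normSq ((starRingEnd ℂ) (u m) * b ((m : ℤ) + 1)) :=
          Finset.sum_lt_sum (fun m _ => hterm m) ⟨m0, Finset.mem_univ m0, hstrict⟩
  have hfin : (N : ℝ) * ε ^ 2 < (N : ℝ)
      * ∑ m : Fin N, Complex.normSq ((starRingEnd ℂ) (u m) * b ((m : ℤ) + 1)) :=
    mul_lt_mul_of_pos_left hgt (by positivity)
  rw [← hdft'] at hfin
  linarith
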